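/- Let A be an n×n copositive matrix and let u be a zero of A. Then the following are equivalent: (a) u is a minimal zero of A; (b) every zero v of A with Supp(v) ⊆ Supp(u) satisfies v = μu for some μ > 0. -/

import Mathlib

open Matrix

/-- A symmetric matrix `A` is copositive if `xᵀ A x ≥ 0` for all entrywise nonnegative `x`. -/
def Copositive {n : ℕ} (A : Matrix (Fin n) (Fin n) ℝ) : Prop :=
  A.IsSymm ∧ ∀ x : Fin n → ℝ, (∀ i, 0 ≤ x i) → 0 ≤ x ⬝ᵥ A.mulVec x

/-- The support of a vector. -/
def Supp {ι : Type*} (u : ι → ℝ) : Set ι := {i | u i ≠ 0}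

/-- A zero of a copositive matrix: a nonzero nonnegative vector `u` with `uᵀ A u = 0`. -/
def IsZeroOf {n : ℕ} (A : Matrix (Fin n) (Fin n) ℝ) (u : Fin n → ℝ) : Prop :=
  u ≠ 0 ∧ (∀ i, 0 ≤ u i) ∧ u ⬝ᵥ A.mulVec u = 0

/-- A minimal zero: a zero such that no zero has support strictly contained in its support. -/
def IsMinimalZeroOf {n : ℕ} (A : Matrix (Fin n) (Fin n) ℝ) (u : Fin n → ℝ) : Prop :=
  IsZeroOf A u ∧ ¬ ∃ v, IsZeroOf A v ∧ Supp v ⊂ Supp u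

/-- The principal submatrix of `A` with rows and columns in `I`. -/
def subMat {n : ℕ} (A : Matrix (Fin n) (Fin n) ℝ) (I : Finset (Fin n)) :
    Matrix {i // i ∈ I} {i // i ∈ I} ℝ :=
  A.submatrix Subtype.val Subtype.val

/-- The subvector of `u` with indices in `I`. -/
def subVec {n : ℕ} (u : Fin n → ℝ) (I : Finset (Fin n)) : {i // i ∈ I} → ℝ :=
  fun i => u i.val

/-- Irreducibility of a copositive matrix `A` with respect to a set `M` of matrices. -/
def IrreducibleWrtSet {n : ℕ} (A : Matrix (Fin n) (Fin n) ℝ)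
    (M : Set (Matrix (Fin n) (Fin n) ℝ)) : Prop :=
  ¬ ∃ γ : ℝ, 0 < γ ∧ ∃ B ∈ M, B ≠ 0 ∧ Copositive (A - γ • B)

/-- Irreducibility of a copositive matrix `A` with respect to a single matrix `M`. -/
def IrreducibleWrtMat {n : ℕ} (A M : Matrix (Fin n) (Fin n) ℝ) : Prop :=
  ¬ ∃ γ : ℝ, 0 < γ ∧ Copositive (A - γ • M)

/-- An extremal element of a cone `K` of vectors. -/
def IsExtremalIn {ι : Type*} (K : Set (ι → ℝ)) (u : ι → ℝ) : Prop :=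
  u ∈ K ∧ u ≠ 0 ∧ ∀ v w, v ∈ K → w ∈ K → u = v + w →
    (∃ a : ℝ, 0 ≤ a ∧ v = a • u) ∧ (∃ b : ℝ, 0 ≤ b ∧ w = b • u)

/-- The matrix with entries 1 at positions `(i,j)` and `(j,i)` and 0 elsewhere. -/
def Eij {n : ℕ} (i j : Fin n) : Matrix (Fin n) (Fin n) ℝ :=
  fun a b => if (a = i ∧ b = j) ∨ (a = j ∧ b = i) then 1 else 0


section Aux
open Matrix

lemma aux_symm {n : ℕ} {A : Matrix (Fin n) (Fin n) ℝ} (hA : A.IsSymm)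
    (x y : Fin n → ℝ) : x ⬝ᵥ A.mulVec y = y ⬝ᵥ A.mulVec x := by
  rw [dotProduct_mulVec, ← Matrix.mulVec_transpose, hA.eq, dotProduct_comm]

lemma Au_nonneg {n : ℕ} (A : Matrix (Fin n) (Fin n) ℝ) (hA : Copositive A)
    (u : Fin n → ℝ) (hun : ∀ i, 0 ≤ u i) (huz : u ⬝ᵥ A.mulVec u = 0) (i : Fin n) :
    0 ≤ A.mulVec u i := by
  by_contra hc
  push_neg at hc
  set c := A.mulVec u i with hcdef
  set d := A i i with hddef
  have key : ∀ t : ℝ, 0 ≤ t → 0 ≤ 2 * t * c + t ^ 2 * d := by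
    intro t ht
    have hx : ∀ j, 0 ≤ (u + t • (Pi.single i 1 : Fin n → ℝ)) j := by
      intro j
      by_cases hj : j = i
      · subst hj; simp; have := hun j; linarith
      · simp [Pi.single_apply, hj]; exact hun j
    have h0 := hA.2 (u + t • (Pi.single i 1 : Fin n → ℝ)) hx
    have hexp : (u + t • (Pi.single i 1 : Fin n → ℝ)) ⬝ᵥ A.mulVec (u + t • (Pi.single i 1 : Fin n → ℝ))
        = u ⬝ᵥ A.mulVec u + 2 * t * c + t ^ 2 * d := by
      rw [Matrix.mulVec_add, Matrix.mulVec_smul, add_dotProduct, smul_dotProduct,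
        dotProduct_add, dotProduct_smul, dotProduct_add, dotProduct_smul]
      have e1 : (Pi.single i 1 : Fin n → ℝ) ⬝ᵥ A.mulVec u = c := by
        simp [dotProduct, Pi.single_apply, hcdef]
      have e2 : u ⬝ᵥ A.mulVec (Pi.single i 1) = c := by
        rw [aux_symm hA.1]; exact e1
      have e3 : (Pi.single i 1 : Fin n → ℝ) ⬝ᵥ A.mulVec (Pi.single i 1) = d := by
        simp [dotProduct, Matrix.mulVec, Pi.single_apply, hddef]
      rw [e1, e2, e3]
      simp only [smul_eq_mul]
      ring
    rw [hexp, huz] at h0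
    linarith
  by_cases hd : d ≤ 0
  · have := key 1 zero_le_one; nlinarith
  · push_neg at hd
    have h1 := key (-c / d) (div_nonneg (by linarith) hd.le)
    have h2 : 2 * (-c / d) * c + (-c / d) ^ 2 * d = -(c ^ 2) / d := by
      field_simp; ring
    rw [h2] at h1
    have h3 : -(c ^ 2) / d < 0 := by
      apply div_neg_of_neg_of_pos _ hd
      nlinarith
    linarith

lemma Au_zero_on_supp {n : ℕ} (A : Matrix (Fin n) (Fin n) ℝ) (hA : Copositive A)
    (u : Fin n → ℝ) (hun : ∀ i, 0 ≤ u i) (huz : u ⬝ᵥ A.mulVec u = 0)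
    (i : Fin n) (hi : u i ≠ 0) : A.mulVec u i = 0 := by
  have hterm : ∀ j, 0 ≤ u j * A.mulVec u j := fun j =>
    mul_nonneg (hun j) (Au_nonneg A hA u hun huz j)
  have hsum : ∑ j, u j * A.mulVec u j = 0 := huz
  have := (Finset.sum_eq_zero_iff_of_nonneg (fun j _ => hterm j)).mp hsum i
    (Finset.mem_univ i)
  have hui : 0 < u i := lt_of_le_of_ne (hun i) (Ne.symm hi)
  have := mul_eq_zero.mp this
  rcases this with h | h
  · exact absurd h hi
  · exact h

end Aux

theorem stmt5 {n : ℕ} (A : Matrix (Fin n) (Fin n) ℝ) (hA : Copositive A)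
    (u : Fin n → ℝ) (hu : IsZeroOf A u) :
    IsMinimalZeroOf A u ↔
      ∀ v, IsZeroOf A v → Supp v ⊆ Supp u → ∃ μ : ℝ, 0 < μ ∧ v = μ • u := by
  constructor
  · rintro ⟨_, hmin⟩ v hv hvs
    obtain ⟨hvne, hvn, hvz⟩ := hv
    obtain ⟨hune, hun, huz⟩ := hu
    -- cross terms vanish
    have hvAu : ∀ i, v i ≠ 0 → A.mulVec u i = 0 := by
      intro i hi
      exact Au_zero_on_supp A hA u hun huz i (hvs hi)
    have hcross : v ⬝ᵥ A.mulVec u = 0 := by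
      apply Finset.sum_eq_zero
      intro i _
      by_cases hi : v i = 0
      · simp [hi]
      · simp [hvAu i hi]
    have hcross' : u ⬝ᵥ A.mulVec v = 0 := by
      rw [aux_symm hA.1]; exact hcross
    -- find minimizing index
    have hS : ∃ i, v i ≠ 0 := by
      by_contra hcon
      push_neg at hcon
      exact hvne (funext fun i => hcon i)
    classical
    set S : Finset (Fin n) := Finset.univ.filter (fun i => v i ≠ 0) with hSdef
    have hSne : S.Nonempty := by
      obtain ⟨i, hi⟩ := hS
      exact ⟨i, by simp [hSdef, hi]⟩
    obtain ⟨i0, hi0S, hmin0⟩ := S.exists_min_image (fun i => u i / v i) hSne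
    have hvi0 : 0 < v i0 := by
      have : v i0 ≠ 0 := by simpa [hSdef] using hi0S
      exact lt_of_le_of_ne (hvn i0) (Ne.symm this)
    have hui0 : 0 < u i0 := by
      have : u i0 ≠ 0 := hvs (by simpa [hSdef, Supp] using hi0S)
      exact lt_of_le_of_ne (hun i0) (Ne.symm this)
    set t := u i0 / v i0 with htdef
    have ht : 0 < t := div_pos hui0 hvi0
    set w : Fin n → ℝ := u - t • v with hwdef
    have hwn : ∀ i, 0 ≤ w i := by
      intro i
      by_cases hi : v i = 0
      · simp [hwdef, hi]; exact hun i
      · have hiS : i ∈ S := by simp [hSdef, hi]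
        have hvi : 0 < v i := lt_of_le_of_ne (hvn i) (Ne.symm hi)
        have := hmin0 i hiS
        have : t * v i ≤ u i := by
          rw [← le_div_iff₀ hvi]; exact this
        simp [hwdef]
        linarith
    have hwz : w ⬝ᵥ A.mulVec w = 0 := by
      rw [hwdef, Matrix.mulVec_sub, Matrix.mulVec_smul, sub_dotProduct,
        smul_dotProduct, dotProduct_sub, dotProduct_smul, dotProduct_sub,
        dotProduct_smul, huz, hvz, hcross, hcross']
      simp
    have hwi0 : w i0 = 0 := by
      simp [hwdef, htdef]
      field_simp
      ring
    by_cases hw : w = 0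
    · refine ⟨t⁻¹, inv_pos.mpr ht, ?_⟩
      have huv : u = t • v := by
        have h := hw
        rw [hwdef, sub_eq_zero] at h
        exact h
      funext i
      have : u i = t * v i := congrFun huv i
      simp [this]
      field_simp
    · exfalso
      apply hmin
      refine ⟨w, ⟨hw, hwn, hwz⟩, ?_⟩
      constructor
      · intro i hi
        simp only [Supp, Set.mem_setOf_eq] at hi ⊢
        intro hui
        apply hi
        have hvi : v i = 0 := by
          by_contra hvi
          exact (hvs hvi) hui
        simp [hwdef, hui, hvi]
      · intro hcon
        have hi0u : i0 ∈ Supp u := by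
          simp only [Supp, Set.mem_setOf_eq]
          exact hui0.ne'
        have := hcon hi0u
        simp only [Supp, Set.mem_setOf_eq] at this
        exact this hwi0
  · intro h
    refine ⟨hu, ?_⟩
    rintro ⟨v, hv, hsub, hnsub⟩
    obtain ⟨μ, hμ, hvmu⟩ := h v hv hsub
    apply hnsub
    intro i hi
    simp only [Supp, Set.mem_setOf_eq] at hi ⊢
    rw [hvmu]
    simp only [Pi.smul_apply, smul_eq_mul]
    exact mul_ne_zero (ne_of_gt hμ) hi
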